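/- If M is ε-pure DP and P_1 = ⊗_{i=1}^n p_{1,i}, P_2 = ⊗_{i=1}^n p_{2,i} are product distributions over X^n, then the KL divergence between the output marginals satisfies KL(M_1, M_2) ≤ ε · Σ_{i=1}^n TV(p_{1,i}, p_{2,i}). -/

import Mathlib

open MeasureTheory ENNReal
open scoped Classical BigOperators

/-- Hamming distance between two data sets in `X^n`. -/
noncomputable def dHam {X : Type*} {n : ℕ} (D D' : Fin n → X) : ℕ :=
  (Finset.univ.filter fun i => D i ≠ D' i).card

/-- KL divergence between two measures, as the expected log Radon–Nikodym derivative. -/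
noncomputable def klDiv {Ω : Type*} [MeasurableSpace Ω] (μ ν : Measure Ω) : ℝ :=
  ∫ x, Real.log ((μ.rnDeriv ν x).toReal) ∂μ

/-- Total variation distance `sup_A (μ(A) - ν(A))`. -/
noncomputable def tvDist {Ω : Type*} [MeasurableSpace Ω] (μ ν : Measure Ω) : ℝ :=
  ⨆ s : Set Ω, ((μ s).toReal - (ν s).toReal)


section AuxLemmas

variable {α X O : Type*} [MeasurableSpace α] [MeasurableSpace X] [MeasurableSpace O]

lemma aux_integrable_bdd (mm : Measure O) [IsFiniteMeasure mm] {F : O → ℝ} {B : ℝ}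
    (hF : Measurable F) (hb : ∀ o, |F o| ≤ B) : Integrable F mm :=
  Integrable.mono' (integrable_const B) hF.aestronglyMeasurable (Filter.Eventually.of_forall hb)

lemma aux_rnDeriv_le (μ ν : Measure O) [IsFiniteMeasure μ] [IsFiniteMeasure ν]
    {C : ℝ≥0∞} (hC : C ≠ ∞) (h : ∀ s, MeasurableSet s → μ s ≤ C * ν s) :
    ∀ᵐ o ∂ν, μ.rnDeriv ν o ≤ C := by
  have hf := Measure.measurable_rnDeriv μ ν
  set f := μ.rnDeriv ν with hfdef
  have hk : ∀ k : ℕ, ν {o | C + ((k : ℝ≥0∞) + 1)⁻¹ ≤ f o} = 0 := by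
    intro k
    set δ : ℝ≥0∞ := ((k : ℝ≥0∞) + 1)⁻¹ with hδ
    have hδ0 : δ ≠ 0 := by simp [hδ]
    have hδtop : δ ≠ ∞ := by
      rw [hδ]
      simp [ENNReal.inv_ne_top]
    set A := {o | C + δ ≤ f o} with hA
    have hAm : MeasurableSet A := measurableSet_le measurable_const hf
    have h1 : (C + δ) * ν A ≤ μ A := by
      calc (C + δ) * ν A = ∫⁻ _ in A, (C + δ) ∂ν := by rw [setLIntegral_const]
      _ ≤ ∫⁻ o in A, f o ∂ν := setLIntegral_mono hf fun o ho => ho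
      _ ≤ μ A := Measure.setLIntegral_rnDeriv_le A
    have h2 : μ A ≤ C * ν A := h A hAm
    have hfin : C * ν A ≠ ∞ := ENNReal.mul_ne_top hC (measure_ne_top ν A)
    have h3 : C * ν A + δ * ν A ≤ C * ν A + 0 := by
      rw [add_zero]
      calc C * ν A + δ * ν A = (C + δ) * ν A := (add_mul _ _ _).symm
      _ ≤ μ A := h1
      _ ≤ C * ν A := h2
    have h4 : δ * ν A = 0 := le_antisymm (ENNReal.le_of_add_le_add_left hfin h3) (zero_le)
    rcases mul_eq_zero.mp h4 with h5 | h5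
    · exact absurd h5 hδ0
    · exact h5
  have hsub : {o | ¬ f o ≤ C} ⊆ ⋃ k : ℕ, {o | C + ((k : ℝ≥0∞) + 1)⁻¹ ≤ f o} := by
    intro o ho
    simp only [Set.mem_setOf_eq, not_le] at ho
    rcases eq_or_ne (f o) ∞ with hfo | hfo
    · exact Set.mem_iUnion.mpr ⟨0, by simp [hfo]⟩
    · have hgap : f o - C ≠ 0 := by
        rw [← pos_iff_ne_zero]
        exact tsub_pos_of_lt ho
      obtain ⟨m, hm⟩ := ENNReal.exists_inv_nat_lt hgap
      refine Set.mem_iUnion.mpr ⟨m, ?_⟩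
      have h6 : ((m : ℝ≥0∞) + 1)⁻¹ ≤ (m : ℝ≥0∞)⁻¹ :=
        ENNReal.inv_le_inv' (le_add_of_nonneg_right zero_le_one)
      have h7 : C + ((m : ℝ≥0∞) + 1)⁻¹ ≤ C + (f o - C) :=
        add_le_add le_rfl (h6.trans hm.le)
      rwa [add_tsub_cancel_of_le ho.le] at h7
  rw [ae_iff]
  exact measure_mono_null hsub (by rw [measure_iUnion_null_iff]; intro k; exact hk k)

lemma aux_rnDeriv_ge (μ ν : Measure O) [IsFiniteMeasure μ] [IsFiniteMeasure ν]
    {c : ℝ≥0∞} (hc0 : c ≠ 0) (hc : c ≠ ∞) (hμν : μ ≪ ν)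
    (h : ∀ s, MeasurableSet s → c * ν s ≤ μ s) :
    ∀ᵐ o ∂ν, c ≤ μ.rnDeriv ν o := by
  have hf := Measure.measurable_rnDeriv μ ν
  set f := μ.rnDeriv ν with hfdef
  have hk : ∀ k : ℕ, ν {o | f o ≤ c - c * ((k : ℝ≥0∞) + 1)⁻¹} = 0 := by
    intro k
    set δ : ℝ≥0∞ := ((k : ℝ≥0∞) + 1)⁻¹ with hδ
    have hδ0 : δ ≠ 0 := by simp [hδ]
    have hδtop : δ ≠ ∞ := by rw [hδ]; simp [ENNReal.inv_ne_top]
    set ck : ℝ≥0∞ := c - c * δ with hck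
    have hcklt : ck < c := by
      refine ENNReal.sub_lt_self hc ?_ ?_
      · exact hc0
      · exact mul_ne_zero hc0 hδ0
    set A := {o | f o ≤ ck} with hA
    have hAm : MeasurableSet A := measurableSet_le hf measurable_const
    have h1 : μ A = ∫⁻ o in A, f o ∂ν := (Measure.setLIntegral_rnDeriv hμν A).symm
    have h2 : μ A ≤ ck * ν A := by
      rw [h1]
      calc ∫⁻ o in A, f o ∂ν ≤ ∫⁻ _ in A, ck ∂ν := setLIntegral_mono measurable_const fun o ho => ho
      _ = ck * ν A := by rw [setLIntegral_const]
    by_contra hne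
    have hν0 : ν A ≠ 0 := by
      intro h0; exact hne h0
    have h3 : c * ν A ≤ ck * ν A := le_trans (h A hAm) h2
    have h4 : ck * ν A < c * ν A := by
      exact ENNReal.mul_lt_mul_left hν0 (measure_ne_top ν A) hcklt
    exact absurd h3 (not_le.mpr h4)
  have hsub : {o | ¬ c ≤ f o} ⊆ ⋃ k : ℕ, {o | f o ≤ c - c * ((k : ℝ≥0∞) + 1)⁻¹} := by
    intro o ho
    simp only [Set.mem_setOf_eq, not_le] at ho
    have hgap : (c - f o) * c⁻¹ ≠ 0 := by
      apply mul_ne_zero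
      · rw [← pos_iff_ne_zero]; exact tsub_pos_of_lt ho
      · exact ENNReal.inv_ne_zero.mpr hc
    obtain ⟨m, hm⟩ := ENNReal.exists_inv_nat_lt hgap
    refine Set.mem_iUnion.mpr ⟨m, ?_⟩
    have h6 : ((m : ℝ≥0∞) + 1)⁻¹ ≤ (m : ℝ≥0∞)⁻¹ :=
      ENNReal.inv_le_inv' (le_add_of_nonneg_right zero_le_one)
    have h7 : c * ((m : ℝ≥0∞) + 1)⁻¹ ≤ c - f o := by
      calc c * ((m : ℝ≥0∞) + 1)⁻¹ ≤ c * ((c - f o) * c⁻¹) :=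
            mul_le_mul' le_rfl (h6.trans hm.le)
      _ = (c - f o) * (c * c⁻¹) := by ring
      _ = c - f o := by rw [ENNReal.mul_inv_cancel hc0 hc, mul_one]
    show f o ≤ c - c * ((m : ℝ≥0∞) + 1)⁻¹
    have h8 : f o + c * ((m : ℝ≥0∞) + 1)⁻¹ ≤ c := by
      calc f o + c * ((m : ℝ≥0∞) + 1)⁻¹ ≤ f o + (c - f o) := add_le_add le_rfl h7
      _ = c := add_tsub_cancel_of_le ho.le
    exact ENNReal.le_sub_of_add_le_right (ENNReal.mul_ne_top hc (by simp [ENNReal.inv_ne_top])) h8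
  rw [ae_iff]
  exact measure_mono_null hsub (by rw [measure_iUnion_null_iff]; intro k; exact hk k)

lemma aux_integral_bind (ρ : Measure α) [IsProbabilityMeasure ρ]
    (κ : α → Measure O) (hκ : Measurable κ) (hκp : ∀ a, IsProbabilityMeasure (κ a))
    (F : O → ℝ) (hF : Measurable F) {B : ℝ} (h0 : ∀ o, 0 ≤ F o) (hB : ∀ o, F o ≤ B) :
    ∫ o, F o ∂(ρ.bind κ) = ∫ a, ∫ o, F o ∂(κ a) ∂ρ := by
  have hFo : Measurable fun o => ENNReal.ofReal (F o) := hF.ennreal_ofReal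
  have hbound : ∀ (m : Measure O), IsProbabilityMeasure m →
      ∫⁻ o, ENNReal.ofReal (F o) ∂m ≤ ENNReal.ofReal B := by
    intro m hm
    calc ∫⁻ o, ENNReal.ofReal (F o) ∂m ≤ ∫⁻ _, ENNReal.ofReal B ∂m :=
          lintegral_mono fun o => ENNReal.ofReal_le_ofReal (hB o)
    _ = ENNReal.ofReal B := by simp [hm.measure_univ]
  have hbind : IsProbabilityMeasure (ρ.bind κ) := by
    constructor
    rw [Measure.bind_apply MeasurableSet.univ hκ.aemeasurable]
    simp [fun a => (hκp a).measure_univ]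
  have e1 : ∫ o, F o ∂(ρ.bind κ) = (∫⁻ o, ENNReal.ofReal (F o) ∂(ρ.bind κ)).toReal := by
    rw [integral_eq_lintegral_of_nonneg_ae (Filter.Eventually.of_forall h0)
      hF.aestronglyMeasurable]
  have e2 : ∫⁻ o, ENNReal.ofReal (F o) ∂(ρ.bind κ)
      = ∫⁻ a, ∫⁻ o, ENNReal.ofReal (F o) ∂(κ a) ∂ρ :=
    Measure.lintegral_bind hκ.aemeasurable hFo.aemeasurable
  have hℓmeas : Measurable fun a => ∫⁻ o, ENNReal.ofReal (F o) ∂(κ a) :=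
    (Measure.measurable_lintegral hFo).comp hκ
  have e3 : ∫ a, ∫ o, F o ∂(κ a) ∂ρ
      = ∫ a, (∫⁻ o, ENNReal.ofReal (F o) ∂(κ a)).toReal ∂ρ := by
    refine integral_congr_ae (Filter.Eventually.of_forall fun a => ?_)
    show ∫ o, F o ∂(κ a) = (∫⁻ o, ENNReal.ofReal (F o) ∂(κ a)).toReal
    rw [integral_eq_lintegral_of_nonneg_ae (Filter.Eventually.of_forall h0)
      hF.aestronglyMeasurable]
  have e4 : ∫ a, (∫⁻ o, ENNReal.ofReal (F o) ∂(κ a)).toReal ∂ρ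
      = (∫⁻ a, ∫⁻ o, ENNReal.ofReal (F o) ∂(κ a) ∂ρ).toReal := by
    refine integral_toReal hℓmeas.aemeasurable ?_
    refine Filter.Eventually.of_forall fun a => ?_
    exact lt_of_le_of_lt (hbound _ (hκp a)) ENNReal.ofReal_lt_top
  rw [e1, e2, e3, e4]

lemma aux_group_privacy {n : ℕ} (ε : ℝ) (hε : 0 ≤ ε)
    (M : (Fin n → X) → Measure O)
    (hDP : ∀ (D D' : Fin n → X) (A : Set O), dHam D D' = 1 →
      M D A ≤ ENNReal.ofReal (Real.exp ε) * M D' A) :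
    ∀ (k : ℕ) (D D' : Fin n → X), dHam D D' ≤ k →
      ∀ A : Set O, M D A ≤ ENNReal.ofReal (Real.exp (ε * k)) * M D' A := by
  intro k
  induction k with
  | zero =>
    intro D D' hd A
    have hd0 : dHam D D' = 0 := Nat.le_zero.mp hd
    have hDD' : D = D' := by
      funext i
      by_contra hne
      have hmem : i ∈ Finset.univ.filter fun i => D i ≠ D' i := by simp [hne]
      have hpos := Finset.card_pos.mpr ⟨i, hmem⟩
      rw [dHam] at hd0
      omega
    subst hDD'
    simp
  | succ k ih =>
    intro D D' hd A
    by_cases hk : dHam D D' ≤ k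
    · refine (ih D D' hk A).trans (mul_le_mul' (ENNReal.ofReal_le_ofReal ?_) le_rfl)
      refine Real.exp_le_exp.mpr ?_
      push_cast
      nlinarith
    · have hd1 : dHam D D' = k + 1 := by omega
      have hpos : 0 < (Finset.univ.filter fun i => D i ≠ D' i).card := by
        rw [dHam] at hd1; omega
      obtain ⟨i, hi⟩ := Finset.card_pos.mp hpos
      simp only [Finset.mem_filter, Finset.mem_univ, true_and] at hi
      have h1 : dHam D (Function.update D i (D' i)) = 1 := by
        rw [dHam, Finset.card_eq_one]
        refine ⟨i, ?_⟩
        ext j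
        simp only [Finset.mem_filter, Finset.mem_univ, true_and, Finset.mem_singleton]
        constructor
        · intro hj
          by_contra hji
          rw [Function.update_of_ne hji] at hj
          exact hj rfl
        · intro hj
          subst hj
          rw [Function.update_self]
          exact hi
      have h2 : dHam (Function.update D i (D' i)) D' ≤ k := by
        have hsub : (Finset.univ.filter fun j => Function.update D i (D' i) j ≠ D' j) ⊆
            (Finset.univ.filter fun j => D j ≠ D' j).erase i := by
          intro j hj
          simp only [Finset.mem_filter, Finset.mem_univ, true_and] at hj
          rw [Finset.mem_erase]
          refine ⟨?_, ?_⟩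
          · intro hji
            subst hji
            rw [Function.update_self] at hj
            exact hj rfl
          · simp only [Finset.mem_filter, Finset.mem_univ, true_and]
            intro hj'
            by_cases hji : j = i
            · subst hji; rw [Function.update_self] at hj; exact hj rfl
            · rw [Function.update_of_ne hji] at hj; exact hj hj'
        have hle := Finset.card_le_card hsub
        rw [Finset.card_erase_of_mem (by simp [hi])] at hle
        rw [dHam] at hd1 ⊢
        omega
      push_cast
      calc M D A ≤ ENNReal.ofReal (Real.exp ε) * M (Function.update D i (D' i)) A :=
            hDP D _ A h1
      _ ≤ ENNReal.ofReal (Real.exp ε) * (ENNReal.ofReal (Real.exp (ε * k)) * M D' A) :=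
          mul_le_mul' le_rfl (ih _ D' h2 A)
      _ = ENNReal.ofReal (Real.exp (ε * (k+1))) * M D' A := by
          rw [← mul_assoc, ← ENNReal.ofReal_mul (Real.exp_pos ε).le, ← Real.exp_add]
          push_cast
          ring_nf

lemma aux_coupling (p1 p2 : Measure X) [IsProbabilityMeasure p1] [IsProbabilityMeasure p2] :
    ∃ ω : Measure (X ⊕ X × X), IsProbabilityMeasure ω ∧
      ω.map (Sum.elim id Prod.fst) = p1 ∧ ω.map (Sum.elim id Prod.snd) = p2 ∧
      (ω (Set.range Sum.inr)).toReal = tvDist p1 p2 := by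
  obtain ⟨s, hs, h₁, h₂⟩ := hahn_decomposition (μ := p1) (ν := p2)
  -- h₁ : ∀ t, MeasurableSet t → t ⊆ s → p2 t ≤ p1 t
  -- h₂ : ∀ t, MeasurableSet t → t ⊆ sᶜ → p1 t ≤ p2 t
  have hle₁ : p2.restrict s ≤ p1.restrict s := by
    refine Measure.le_iff.mpr fun t ht => ?_
    rw [Measure.restrict_apply ht, Measure.restrict_apply ht]
    exact h₁ _ (ht.inter hs) Set.inter_subset_right
  have hle₂ : p1.restrict sᶜ ≤ p2.restrict sᶜ := by
    refine Measure.le_iff.mpr fun t ht => ?_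
    rw [Measure.restrict_apply ht, Measure.restrict_apply ht]
    exact h₂ _ (ht.inter hs.compl) Set.inter_subset_right
  set m : Measure X := p2.restrict s + p1.restrict sᶜ with hm
  set e₁ : Measure X := p1.restrict s - p2.restrict s with he₁
  set e₂ : Measure X := p2.restrict sᶜ - p1.restrict sᶜ with he₂
  have he₁le : e₁ ≤ p1.restrict s := Measure.sub_le
  have he₂le : e₂ ≤ p2.restrict sᶜ := Measure.sub_le
  have hp1 : m + e₁ = p1 := by
    rw [hm, he₁]
    rw [add_comm (p2.restrict s) (p1.restrict sᶜ), add_assoc,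
      add_comm (p2.restrict s) (p1.restrict s - p2.restrict s),
      Measure.sub_add_cancel_of_le hle₁, add_comm, Measure.restrict_add_restrict_compl hs]
  have hp2 : m + e₂ = p2 := by
    rw [hm, he₂, add_assoc, add_comm (p1.restrict sᶜ) (p2.restrict sᶜ - p1.restrict sᶜ),
      Measure.sub_add_cancel_of_le hle₂, Measure.restrict_add_restrict_compl hs]
  have he₁app : ∀ t, MeasurableSet t → e₁ t = p1 (t ∩ s) - p2 (t ∩ s) := by
    intro t ht
    rw [he₁, Measure.sub_apply ht hle₁, Measure.restrict_apply ht, Measure.restrict_apply ht]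
  have he₂app : ∀ t, MeasurableSet t → e₂ t = p2 (t ∩ sᶜ) - p1 (t ∩ sᶜ) := by
    intro t ht
    rw [he₂, Measure.sub_apply ht hle₂, Measure.restrict_apply ht, Measure.restrict_apply ht]
  set T : ℝ≥0∞ := p1 s - p2 s with hT
  have hTe₁ : e₁ Set.univ = T := by
    rw [he₁app Set.univ MeasurableSet.univ, Set.univ_inter]
  have hba : p2 s ≤ p1 s := h₁ s hs le_rfl
  have hTne : T ≠ ∞ := by
    rw [hT]
    exact ne_top_of_le_ne_top (measure_ne_top p1 s) tsub_le_self
  have hcompl1 : p1 sᶜ = 1 - p1 s := prob_compl_eq_one_sub hs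
  have hcompl2 : p2 sᶜ = 1 - p2 s := prob_compl_eq_one_sub hs
  have hTe₂ : e₂ Set.univ = T := by
    rw [he₂app Set.univ MeasurableSet.univ, Set.univ_inter, hcompl1, hcompl2, hT]
    have hp1le : p1 s ≤ 1 := prob_le_one
    have hp2le : p2 s ≤ 1 := prob_le_one
    have htop1 : (1 : ℝ≥0∞) - p2 s - (1 - p1 s) ≠ ∞ :=
      ne_top_of_le_ne_top (ne_top_of_le_ne_top one_ne_top tsub_le_self) tsub_le_self
    have htop2 : p1 s - p2 s ≠ ∞ :=
      ne_top_of_le_ne_top (measure_ne_top p1 s) tsub_le_self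
    refine (ENNReal.toReal_eq_toReal_iff' htop1 htop2).mp ?_
    rw [ENNReal.toReal_sub_of_le (tsub_le_tsub_left hba 1)
        (ne_top_of_le_ne_top one_ne_top tsub_le_self),
      ENNReal.toReal_sub_of_le hp2le one_ne_top,
      ENNReal.toReal_sub_of_le hp1le one_ne_top,
      ENNReal.toReal_sub_of_le hba (measure_ne_top p1 s)]
    simp only [ENNReal.toReal_one]
    ring
  -- the TV distance equals T.toReal
  have hkey : ∀ t : Set X, (p1 t).toReal - (p2 t).toReal ≤ (p1 s).toReal - (p2 s).toReal := by
    intro t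
    set t' := toMeasurable p2 t with ht'def
    have ht'm : MeasurableSet t' := measurableSet_toMeasurable p2 t
    have hsub : t ⊆ t' := subset_toMeasurable p2 t
    have hp2t : p2 t' = p2 t := measure_toMeasurable t
    have step1 : (p1 t).toReal - (p2 t).toReal ≤ (p1 t').toReal - (p2 t').toReal := by
      have := ENNReal.toReal_mono (measure_ne_top p1 t') (measure_mono hsub)
      rw [hp2t]
      linarith
    refine step1.trans ?_
    have hd1 : p1 (t' ∩ s) + p1 (t' \ s) = p1 t' := measure_inter_add_diff t' hs
    have hd2 : p2 (t' ∩ s) + p2 (t' \ s) = p2 t' := measure_inter_add_diff t' hs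
    have hd3 : p1 (s ∩ t') + p1 (s \ t') = p1 s := measure_inter_add_diff s ht'm
    have hd4 : p2 (s ∩ t') + p2 (s \ t') = p2 s := measure_inter_add_diff s ht'm
    have hc1 : p2 (s \ t') ≤ p1 (s \ t') := h₁ _ (hs.diff ht'm) Set.diff_subset
    have hc2 : p1 (t' \ s) ≤ p2 (t' \ s) := by
      refine h₂ _ (ht'm.diff hs) ?_
      intro x hx
      exact hx.2
    have hst : s ∩ t' = t' ∩ s := Set.inter_comm s t'
    rw [hst] at hd3 hd4
    have e1 : (p1 (t' ∩ s)).toReal + (p1 (t' \ s)).toReal = (p1 t').toReal := by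
      rw [← ENNReal.toReal_add (measure_ne_top p1 _) (measure_ne_top p1 _), hd1]
    have e2 : (p2 (t' ∩ s)).toReal + (p2 (t' \ s)).toReal = (p2 t').toReal := by
      rw [← ENNReal.toReal_add (measure_ne_top p2 _) (measure_ne_top p2 _), hd2]
    have e3 : (p1 (t' ∩ s)).toReal + (p1 (s \ t')).toReal = (p1 s).toReal := by
      rw [← ENNReal.toReal_add (measure_ne_top p1 _) (measure_ne_top p1 _), hd3]
    have e4 : (p2 (t' ∩ s)).toReal + (p2 (s \ t')).toReal = (p2 s).toReal := by
      rw [← ENNReal.toReal_add (measure_ne_top p2 _) (measure_ne_top p2 _), hd4]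
    have r1 : (p2 (s \ t')).toReal ≤ (p1 (s \ t')).toReal :=
      ENNReal.toReal_mono (measure_ne_top p1 _) hc1
    have r2 : (p1 (t' \ s)).toReal ≤ (p2 (t' \ s)).toReal :=
      ENNReal.toReal_mono (measure_ne_top p2 _) hc2
    linarith
  have hTv : tvDist p1 p2 = T.toReal := by
    have hTval : T.toReal = (p1 s).toReal - (p2 s).toReal :=
      ENNReal.toReal_sub_of_le hba (measure_ne_top p1 s)
    rw [tvDist, hTval]
    apply le_antisymm
    · exact ciSup_le hkey
    · refine le_ciSup_of_le ⟨(p1 s).toReal - (p2 s).toReal, ?_⟩ s le_rfl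
      rintro x ⟨t, rfl⟩
      exact hkey t
  -- the coupling measure
  have hfin₁ : IsFiniteMeasure e₁ := by
    refine isFiniteMeasure_of_le (p1.restrict s) ?_
    exact he₁le
  have hfin₂ : IsFiniteMeasure e₂ := by
    refine isFiniteMeasure_of_le (p2.restrict sᶜ) ?_
    exact he₂le
  set ω : Measure (X ⊕ X × X) :=
    m.map Sum.inl + T⁻¹ • ((e₁.prod e₂).map Sum.inr) with hω
  have hπ₁ : Measurable (Sum.elim (id : X → X) (Prod.fst : X × X → X)) :=
    measurable_id.sumElim measurable_fst
  have hπ₂ : Measurable (Sum.elim (id : X → X) (Prod.snd : X × X → X)) :=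
    measurable_id.sumElim measurable_snd
  have hprod_univ : (e₁.prod e₂) Set.univ = T * T := by
    rw [← Set.univ_prod_univ, Measure.prod_prod, hTe₁, hTe₂]
  have hTinv : T⁻¹ * (T * T) = T := by
    rcases eq_or_ne T 0 with h0 | h0
    · rw [h0]; simp
    · rw [← mul_assoc, ENNReal.inv_mul_cancel h0 hTne, one_mul]
  have hωapp : ∀ u : Set (X ⊕ X × X), MeasurableSet u →
      ω u = m (Sum.inl ⁻¹' u) + T⁻¹ * (e₁.prod e₂) (Sum.inr ⁻¹' u) := by
    intro u hu
    rw [hω, Measure.add_apply, Measure.smul_apply, smul_eq_mul,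
      Measure.map_apply measurable_inl hu, Measure.map_apply measurable_inr hu]
  have hmuniv : m Set.univ + T = 1 := by
    have : m Set.univ + e₁ Set.univ = p1 Set.univ := by
      rw [← Measure.add_apply, hp1]
    rw [hTe₁] at this
    rw [this, measure_univ]
  have hωprob : IsProbabilityMeasure ω := by
    constructor
    rw [hωapp Set.univ MeasurableSet.univ]
    simp only [Set.preimage_univ]
    rw [hprod_univ, hTinv, hmuniv]
  have hmap₁ : ω.map (Sum.elim id Prod.fst) = p1 := by
    ext u hu
    rw [Measure.map_apply hπ₁ hu, hωapp _ (hπ₁ hu)]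
    have hpre₁ : Sum.inl ⁻¹' (Sum.elim (id : X → X) (Prod.fst : X × X → X) ⁻¹' u) = u := by
      ext x; simp
    have hpre₂ : Sum.inr ⁻¹' (Sum.elim (id : X → X) (Prod.fst : X × X → X) ⁻¹' u) = u ×ˢ Set.univ := by
      ext x; cases x with | mk a b => simp
    rw [hpre₁, hpre₂, Measure.prod_prod, hTe₂]
    have : T⁻¹ * (e₁ u * T) = e₁ u := by
      rcases eq_or_ne T 0 with h0 | h0
      · have he₁u : e₁ u = 0 := by
          have := measure_mono (Set.subset_univ u) (μ := e₁)
          rw [hTe₁, h0] at this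
          exact le_antisymm this (zero_le)
        rw [he₁u, h0]; simp
      · rw [mul_comm (e₁ u) T, ← mul_assoc, ENNReal.inv_mul_cancel h0 hTne, one_mul]
    rw [this]
    have : m u + e₁ u = p1 u := by rw [← Measure.add_apply, hp1]
    exact this
  have hmap₂ : ω.map (Sum.elim id Prod.snd) = p2 := by
    ext u hu
    rw [Measure.map_apply hπ₂ hu, hωapp _ (hπ₂ hu)]
    have hpre₁ : Sum.inl ⁻¹' (Sum.elim (id : X → X) (Prod.snd : X × X → X) ⁻¹' u) = u := by
      ext x; simp
    have hpre₂ : Sum.inr ⁻¹' (Sum.elim (id : X → X) (Prod.snd : X × X → X) ⁻¹' u) = Set.univ ×ˢ u := by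
      ext x; cases x with | mk a b => simp
    rw [hpre₁, hpre₂, Measure.prod_prod, hTe₁]
    have : T⁻¹ * (T * e₂ u) = e₂ u := by
      rcases eq_or_ne T 0 with h0 | h0
      · have he₂u : e₂ u = 0 := by
          have := measure_mono (Set.subset_univ u) (μ := e₂)
          rw [hTe₂, h0] at this
          exact le_antisymm this (zero_le)
        rw [he₂u, h0]; simp
      · rw [← mul_assoc, ENNReal.inv_mul_cancel h0 hTne, one_mul]
    rw [this]
    have : m u + e₂ u = p2 u := by rw [← Measure.add_apply, hp2]
    exact this
  have hrange : ω (Set.range Sum.inr) = T := by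
    rw [hωapp _ measurableSet_range_inr]
    have h1 : Sum.inl ⁻¹' (Set.range (Sum.inr : X × X → X ⊕ X × X)) = ∅ := by
      ext x; simp
    have h2 : Sum.inr ⁻¹' (Set.range (Sum.inr : X × X → X ⊕ X × X)) = Set.univ := by
      ext x; simp
    rw [h1, h2, hprod_univ, hTinv]
    simp
  exact ⟨ω, hωprob, hmap₁, hmap₂, by rw [hrange, hTv]⟩

end AuxLemmas

/-- KL decomposition for product distributions: if `M` is `ε`-pure DP and
`P₁ = ⊗ᵢ p₁ᵢ`, `P₂ = ⊗ᵢ p₂ᵢ` are product distributions over `X^n`, then the KL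
divergence between the output marginals is at most `ε · Σᵢ TV(p₁ᵢ, p₂ᵢ)`. -/
theorem kl_marginals_product_le {X O : Type*} [MeasurableSpace X] [MeasurableSpace O]
    {n : ℕ} (ε : ℝ) (hε : 0 ≤ ε)
    (M : (Fin n → X) → Measure O) (hM : Measurable M)
    (hMprob : ∀ D, IsProbabilityMeasure (M D))
    (hDP : ∀ (D D' : Fin n → X) (A : Set O), dHam D D' = 1 →
      M D A ≤ ENNReal.ofReal (Real.exp ε) * M D' A)
    (p1 p2 : Fin n → Measure X)
    [∀ i, IsProbabilityMeasure (p1 i)] [∀ i, IsProbabilityMeasure (p2 i)] :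
    klDiv ((Measure.pi p1).bind M) ((Measure.pi p2).bind M) ≤
      ε * ∑ i, tvDist (p1 i) (p2 i) := by
  classical
  set P₁ := Measure.pi p1 with hP₁
  set P₂ := Measure.pi p2 with hP₂
  set μ := P₁.bind M with hμ
  set ν := P₂.bind M with hν
  have hεn : 0 ≤ ε * n := mul_nonneg hε (Nat.cast_nonneg n)
  set C : ℝ≥0∞ := ENNReal.ofReal (Real.exp (ε * n)) with hC
  set c : ℝ≥0∞ := ENNReal.ofReal (Real.exp (-(ε * n))) with hc
  have hCne : C ≠ ∞ := ENNReal.ofReal_ne_top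
  have hcne : c ≠ ∞ := ENNReal.ofReal_ne_top
  have hc0 : c ≠ 0 := (ENNReal.ofReal_pos.mpr (Real.exp_pos _)).ne'
  have hcC : c * C = 1 := by
    rw [hc, hC, ← ENNReal.ofReal_mul (Real.exp_pos _).le, ← Real.exp_add]
    simp
  -- group privacy
  have hGP := aux_group_privacy ε hε M hDP
  have hdn : ∀ D D' : Fin n → X, dHam D D' ≤ n := by
    intro D D'
    rw [dHam]
    calc (Finset.univ.filter fun i => D i ≠ D' i).card ≤ Finset.univ.card :=
      Finset.card_filter_le _ _
    _ = n := Finset.card_univ.trans (Fintype.card_fin n)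
  have hGPn : ∀ (D D' : Fin n → X) (A : Set O), M D A ≤ C * M D' A := by
    intro D D' A
    exact hGP n D D' (hdn D D') A
  -- probability instances
  have hMA : ∀ A : Set O, MeasurableSet A → Measurable fun D => M D A := by
    intro A hA
    exact (Measure.measurable_coe hA).comp hM
  have hμprob : IsProbabilityMeasure μ := by
    constructor
    rw [hμ, Measure.bind_apply MeasurableSet.univ hM.aemeasurable]
    simp [fun D => (hMprob D).measure_univ]
  have hνprob : IsProbabilityMeasure ν := by
    constructor
    rw [hν, Measure.bind_apply MeasurableSet.univ hM.aemeasurable]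
    simp [fun D => (hMprob D).measure_univ]
  -- domination facts
  have hMν : ∀ (D : Fin n → X) (A : Set O), MeasurableSet A → M D A ≤ C * ν A := by
    intro D A hA
    calc M D A = ∫⁻ _, M D A ∂P₂ := by
          rw [lintegral_const, measure_univ, mul_one]
    _ ≤ ∫⁻ D', C * M D' A ∂P₂ := lintegral_mono fun D' => hGPn D D' A
    _ = C * ∫⁻ D', M D' A ∂P₂ := lintegral_const_mul C (hMA A hA)
    _ = C * ν A := by rw [hν, Measure.bind_apply hA hM.aemeasurable]
  have hMμ : ∀ (D : Fin n → X) (A : Set O), MeasurableSet A → M D A ≤ C * μ A := by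
    intro D A hA
    calc M D A = ∫⁻ _, M D A ∂P₁ := by
          rw [lintegral_const, measure_univ, mul_one]
    _ ≤ ∫⁻ D', C * M D' A ∂P₁ := lintegral_mono fun D' => hGPn D D' A
    _ = C * ∫⁻ D', M D' A ∂P₁ := lintegral_const_mul C (hMA A hA)
    _ = C * μ A := by rw [hμ, Measure.bind_apply hA hM.aemeasurable]
  have hμleC : ∀ A : Set O, MeasurableSet A → μ A ≤ C * ν A := by
    intro A hA
    rw [hμ, Measure.bind_apply hA hM.aemeasurable]
    calc ∫⁻ D, M D A ∂P₁ ≤ ∫⁻ _, C * ν A ∂P₁ := lintegral_mono fun D => hMν D A hA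
    _ = C * ν A := by rw [lintegral_const, measure_univ, mul_one]
  have hνleC : ∀ A : Set O, MeasurableSet A → ν A ≤ C * μ A := by
    intro A hA
    rw [hν, Measure.bind_apply hA hM.aemeasurable]
    calc ∫⁻ D, M D A ∂P₂ ≤ ∫⁻ _, C * μ A ∂P₂ := lintegral_mono fun D => hMμ D A hA
    _ = C * μ A := by rw [lintegral_const, measure_univ, mul_one]
  have hμν : μ ≪ ν := by
    refine Measure.AbsolutelyContinuous.mk fun A hA h0 => ?_
    have := hμleC A hA
    rw [h0, mul_zero] at this
    exact le_antisymm this (zero_le)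
  have hMνac : ∀ D, M D ≪ ν := by
    intro D
    refine Measure.AbsolutelyContinuous.mk fun A hA h0 => ?_
    have := hMν D A hA
    rw [h0, mul_zero] at this
    exact le_antisymm this (zero_le)
  -- rnDeriv bounds
  set f := μ.rnDeriv ν with hf
  have hfmeas : Measurable f := Measure.measurable_rnDeriv μ ν
  have hub : ∀ᵐ o ∂ν, f o ≤ C := aux_rnDeriv_le μ ν hCne hμleC
  have hlb : ∀ᵐ o ∂ν, c ≤ f o := by
    refine aux_rnDeriv_ge μ ν hc0 hcne hμν fun s hs => ?_
    calc c * ν s ≤ c * (C * μ s) := mul_le_mul' le_rfl (hνleC s hs)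
    _ = (c * C) * μ s := (mul_assoc _ _ _).symm
    _ = μ s := by rw [hcC, one_mul]
  have hgood : ∀ᵐ o ∂ν, c ≤ f o ∧ f o ≤ C := hlb.and hub
  have hgoodD : ∀ D : Fin n → X, ∀ᵐ o ∂(M D), c ≤ f o ∧ f o ≤ C :=
    fun D => (hMνac D).ae_le hgood
  have hgoodμ : ∀ᵐ o ∂μ, c ≤ f o ∧ f o ≤ C := hμν.ae_le hgood
  -- truncated density and log
  set fR : O → ℝ := fun o => min (f o).toReal (Real.exp (ε * n)) with hfR
  set g' : O → ℝ := fun o => max (Real.log (fR o)) (-(ε * n)) with hg'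
  have hfRmeas : Measurable fR := (hfmeas.ennreal_toReal).min measurable_const
  have hg'meas : Measurable g' := (Real.measurable_log.comp hfRmeas).max measurable_const
  have hfRnn : ∀ o, 0 ≤ fR o := fun o => le_min ENNReal.toReal_nonneg (Real.exp_pos _).le
  have hfRle : ∀ o, fR o ≤ Real.exp (ε * n) := fun o => min_le_right _ _
  have hg'lb : ∀ o, -(ε * n) ≤ g' o := fun o => le_max_right _ _
  have hg'ub : ∀ o, g' o ≤ ε * n := by
    intro o
    refine max_le ?_ (by linarith)
    rcases eq_or_lt_of_le (hfRnn o) with h0 | h0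
    · rw [← h0, Real.log_zero]; exact hεn
    · calc Real.log (fR o) ≤ Real.log (Real.exp (ε * n)) :=
        Real.log_le_log h0 (hfRle o)
      _ = ε * n := Real.log_exp _
  have hg'bdd : ∀ o, |g' o| ≤ ε * n := fun o => abs_le.mpr ⟨hg'lb o, hg'ub o⟩
  -- at good points, fR and g' are the true quantities
  have hgood_fR : ∀ o, c ≤ f o → f o ≤ C → fR o = (f o).toReal ∧
      Real.exp (-(ε * n)) ≤ (f o).toReal ∧ (f o).toReal ≤ Real.exp (ε * n) ∧
      g' o = Real.log ((f o).toReal) := by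
    intro o h1 h2
    have hfne : f o ≠ ∞ := ne_top_of_le_ne_top hCne h2
    have hge : Real.exp (-(ε * n)) ≤ (f o).toReal := by
      rw [hc] at h1
      exact (ENNReal.ofReal_le_iff_le_toReal hfne).mp h1
    have hle : (f o).toReal ≤ Real.exp (ε * n) := by
      rw [hC] at h2
      exact ENNReal.toReal_le_of_le_ofReal (Real.exp_pos _).le h2
    have hfReq : fR o = (f o).toReal := min_eq_left hle
    refine ⟨hfReq, hge, hle, ?_⟩
    rw [hg']
    simp only [hfReq]
    refine max_eq_left ?_
    calc -(ε * n) = Real.log (Real.exp (-(ε * n))) := (Real.log_exp _).symm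
    _ ≤ Real.log ((f o).toReal) := Real.log_le_log (Real.exp_pos _) hge
  -- construct the coupling
  choose ω hωprob hωmap₁ hωmap₂ hωtv using fun i => aux_coupling (p1 i) (p2 i)
  haveI : ∀ i, IsProbabilityMeasure (ω i) := hωprob
  set κ := Measure.pi ω with hκ
  haveI hκprob : IsProbabilityMeasure κ := by rw [hκ]; infer_instance
  have hπ₁ : Measurable (Sum.elim (id : X → X) (Prod.fst : X × X → X)) :=
    measurable_id.sumElim measurable_fst
  have hπ₂ : Measurable (Sum.elim (id : X → X) (Prod.snd : X × X → X)) :=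
    measurable_id.sumElim measurable_snd
  set Φ₁ : (Fin n → X ⊕ X × X) → (Fin n → X) :=
    fun h i => Sum.elim id Prod.fst (h i) with hΦ₁
  set Φ₂ : (Fin n → X ⊕ X × X) → (Fin n → X) :=
    fun h i => Sum.elim id Prod.snd (h i) with hΦ₂
  have hΦ₁meas : Measurable Φ₁ :=
    measurable_pi_lambda _ fun i => hπ₁.comp (measurable_pi_apply i)
  have hΦ₂meas : Measurable Φ₂ :=
    measurable_pi_lambda _ fun i => hπ₂.comp (measurable_pi_apply i)
  have hmapΦ₁ : κ.map Φ₁ = P₁ := by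
    rw [hP₁]
    refine (Measure.pi_eq fun s hs => ?_).symm
    rw [Measure.map_apply hΦ₁meas (MeasurableSet.univ_pi hs)]
    have hpre : Φ₁ ⁻¹' (Set.pi Set.univ s) =
        Set.pi Set.univ fun i => Sum.elim (id : X → X) (Prod.fst : X × X → X) ⁻¹' s i := by
      ext h
      simp [hΦ₁, Set.mem_pi]
    rw [hpre, hκ, Measure.pi_pi]
    refine Finset.prod_congr rfl fun i _ => ?_
    rw [← hωmap₁ i, Measure.map_apply hπ₁ (hs i)]
  have hmapΦ₂ : κ.map Φ₂ = P₂ := by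
    rw [hP₂]
    refine (Measure.pi_eq fun s hs => ?_).symm
    rw [Measure.map_apply hΦ₂meas (MeasurableSet.univ_pi hs)]
    have hpre : Φ₂ ⁻¹' (Set.pi Set.univ s) =
        Set.pi Set.univ fun i => Sum.elim (id : X → X) (Prod.snd : X × X → X) ⁻¹' s i := by
      ext h
      simp [hΦ₂, Set.mem_pi]
    rw [hpre, hκ, Measure.pi_pi]
    refine Finset.prod_congr rfl fun i _ => ?_
    rw [← hωmap₂ i, Measure.map_apply hπ₂ (hs i)]
  have hbind₁ : μ = κ.bind fun h => M (Φ₁ h) := by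
    refine Measure.ext fun A hA => ?_
    have hrhs : (κ.bind fun h => M (Φ₁ h)) A = ∫⁻ h, M (Φ₁ h) A ∂κ :=
      Measure.bind_apply hA (hM.comp hΦ₁meas).aemeasurable
    rw [hμ, Measure.bind_apply hA hM.aemeasurable, ← hmapΦ₁, lintegral_map (hMA A hA) hΦ₁meas, hrhs]
  have hbind₂ : ν = κ.bind fun h => M (Φ₂ h) := by
    refine Measure.ext fun A hA => ?_
    have hrhs : (κ.bind fun h => M (Φ₂ h)) A = ∫⁻ h, M (Φ₂ h) A ∂κ :=
      Measure.bind_apply hA (hM.comp hΦ₂meas).aemeasurable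
    rw [hν, Measure.bind_apply hA hM.aemeasurable, ← hmapΦ₂, lintegral_map (hMA A hA) hΦ₂meas, hrhs]
  -- the count of off-diagonal coordinates
  set cnt : (Fin n → X ⊕ X × X) → ℕ :=
    fun h => (Finset.univ.filter fun i => (h i).isRight).card with hcnt
  have hisRight : ∀ y : X ⊕ X × X, y.isRight = true ↔ y ∈ Set.range Sum.inr := by
    intro y
    cases y with
    | inl a => simp
    | inr b => simp
  have hAi : ∀ i : Fin n, MeasurableSet {h : Fin n → X ⊕ X × X | (h i).isRight = true} := by
    intro i
    have : {h : Fin n → X ⊕ X × X | (h i).isRight = true} =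
        (fun h : Fin n → X ⊕ X × X => h i) ⁻¹' (Set.range Sum.inr) := by
      ext h
      simp [hisRight]
    rw [this]
    exact (measurable_pi_apply i) measurableSet_range_inr
  have hκAi : ∀ i : Fin n, κ {h : Fin n → X ⊕ X × X | (h i).isRight = true}
      = ω i (Set.range Sum.inr) := by
    intro i
    have hset : {h : Fin n → X ⊕ X × X | (h i).isRight = true} =
        Set.pi Set.univ (Function.update (fun _ : Fin n => (Set.univ : Set (X ⊕ X × X)))
          i (Set.range Sum.inr)) := by
      ext h
      simp only [Set.mem_setOf_eq, Set.mem_pi, Set.mem_univ, true_implies]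
      constructor
      · intro hh j
        rcases eq_or_ne j i with rfl | hj
        · rw [Function.update_self]
          exact (hisRight _).mp hh
        · rw [Function.update_of_ne hj]
          trivial
      · intro hh
        have := hh i
        rw [Function.update_self] at this
        exact (hisRight _).mpr this
    rw [hset, hκ, Measure.pi_pi]
    refine Finset.prod_eq_single_of_mem i (Finset.mem_univ i) ?_ |>.trans ?_
    · intro j _ hj
      rw [Function.update_of_ne hj]
      exact measure_univ
    · rw [Function.update_self]
  set cntR : (Fin n → X ⊕ X × X) → ℝ :=
    fun h => ∑ i : Fin n, (if (h i).isRight = true then (1:ℝ) else 0) with hcntR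
  have hcnt_cast : ∀ h, cntR h = (cnt h : ℝ) := by
    intro h
    rw [hcntR, hcnt]
    simp only [Finset.card_filter]
    push_cast
    rfl
  have hcntRmeas : Measurable cntR := by
    refine Finset.measurable_sum _ fun i _ => ?_
    have : (fun h : Fin n → X ⊕ X × X => if (h i).isRight = true then (1:ℝ) else 0) =
        Set.indicator {h : Fin n → X ⊕ X × X | (h i).isRight = true} (fun _ => (1:ℝ)) := by
      funext h
      by_cases hh : (h i).isRight = true <;> simp [hh, Set.indicator]
    rw [this]
    exact (measurable_const (a := (1:ℝ))).indicator (hAi i)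
  have hcntRbdd : ∀ h, |cntR h| ≤ (n : ℝ) := by
    intro h
    rw [hcnt_cast]
    rw [abs_of_nonneg (Nat.cast_nonneg _)]
    have : cnt h ≤ n := by
      rw [hcnt]
      calc (Finset.univ.filter fun i => (h i).isRight).card ≤ Finset.univ.card :=
        Finset.card_filter_le _ _
      _ = n := Finset.card_univ.trans (Fintype.card_fin n)
    exact_mod_cast this
  have hcntint : ∫ h, cntR h ∂κ = ∑ i, tvDist (p1 i) (p2 i) := by
    rw [hcntR, integral_finset_sum]
    · refine Finset.sum_congr rfl fun i _ => ?_
      have hind : (fun h : Fin n → X ⊕ X × X => if (h i).isRight = true then (1:ℝ) else 0) =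
          Set.indicator {h : Fin n → X ⊕ X × X | (h i).isRight = true} (fun _ => (1:ℝ)) := by
        funext h
        by_cases hh : (h i).isRight = true <;> simp [hh, Set.indicator]
      rw [hind, integral_indicator_const (1:ℝ) (hAi i), measureReal_def, hκAi i, hωtv i]
      simp
    · intro i _
      refine aux_integrable_bdd κ (F := fun h => if (h i).isRight = true then (1:ℝ) else 0)
        (B := 1) ?_ ?_
      · have : (fun h : Fin n → X ⊕ X × X => if (h i).isRight = true then (1:ℝ) else 0) =
            Set.indicator {h : Fin n → X ⊕ X × X | (h i).isRight = true} (fun _ => (1:ℝ)) := by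
          funext h
          by_cases hh : (h i).isRight = true <;> simp [hh, Set.indicator]
        rw [this]
        exact (measurable_const (a := (1:ℝ))).indicator (hAi i)
      · intro h
        by_cases hh : (h i).isRight = true <;> simp [hh]
  have hdk : ∀ h, dHam (Φ₁ h) (Φ₂ h) ≤ cnt h := by
    intro h
    rw [dHam, hcnt]
    refine Finset.card_le_card fun i hi => ?_
    simp only [Finset.mem_filter, Finset.mem_univ, true_and] at hi ⊢
    by_contra hright
    have : ∃ a, h i = Sum.inl a := by
      cases hhi : h i with
      | inl a => exact ⟨a, rfl⟩
      | inr b => rw [hhi] at hright; simp at hright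
    obtain ⟨a, ha⟩ := this
    apply hi
    rw [hΦ₁, hΦ₂]
    simp only [ha]
    rfl
  -- shifted nonnegative version of g'
  set b : ℝ := ε * n with hb
  set G : O → ℝ := fun o => g' o + b with hG
  have hGmeas : Measurable G := hg'meas.add measurable_const
  have hGnn : ∀ o, 0 ≤ G o := fun o => by
    have := hg'lb o
    rw [hG]
    simp only
    linarith
  have hGub : ∀ o, G o ≤ 2 * b := fun o => by
    have := hg'ub o
    rw [hG]
    simp only
    linarith
  -- the two inner-integral functions
  set J : (Fin n → X ⊕ X × X) → ℝ := fun h => ∫ o, G o ∂(M (Φ₁ h)) with hJ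
  set K2 : (Fin n → X ⊕ X × X) → ℝ := fun h => ∫ o, fR o ∂(M (Φ₂ h)) with hK2
  have hfRabs : ∀ o, |fR o| ≤ Real.exp b := fun o => by
    rw [abs_of_nonneg (hfRnn o)]
    exact hfRle o
  -- the core pointwise-in-h inequality
  have hcore : ∀ h, J h ≤ ε * cntR h + K2 h + (b - 1) := by
    intro h
    set D := Φ₁ h with hD
    set D' := Φ₂ h with hD'
    haveI := hMprob D
    haveI := hMprob D'
    set kR : ℝ := (cnt h : ℝ) with hkR
    have hkRnn : 0 ≤ kR := Nat.cast_nonneg _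
    -- pointwise a.e. inequality
    have hae : ∀ᵐ o ∂(M D), g' o + 1 ≤ ε * kR + Real.exp (-(ε * kR)) * fR o := by
      filter_upwards [hgoodD D] with o ho
      obtain ⟨hfReq, hge, hle, hg'eq⟩ := hgood_fR o ho.1 ho.2
      set t := (f o).toReal with ht
      have htpos : 0 < t := lt_of_lt_of_le (Real.exp_pos _) hge
      have hupos : 0 < Real.exp (-(ε * kR)) * t :=
        mul_pos (Real.exp_pos _) htpos
      have hlog := Real.log_le_sub_one_of_pos hupos
      rw [Real.log_mul (Real.exp_pos _).ne' htpos.ne', Real.log_exp] at hlog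
      rw [hg'eq, hfReq]
      linarith
    -- integrate
    have hint_g' : Integrable (fun o => g' o + 1) (M D) := by
      refine aux_integrable_bdd (M D) (hg'meas.add measurable_const) (B := ε * n + 1) ?_
      intro o
      calc |g' o + 1| ≤ |g' o| + 1 := by
            have := abs_add_le (g' o) 1
            simpa using this
      _ ≤ ε * n + 1 := by have := hg'bdd o; linarith
    have hint_rhs : Integrable (fun o => ε * kR + Real.exp (-(ε * kR)) * fR o) (M D) := by
      refine aux_integrable_bdd (M D)
        (measurable_const.add (hfRmeas.const_mul _)) (B := ε * kR + Real.exp (-(ε * kR)) * Real.exp b) ?_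
      intro o
      have h1 : 0 ≤ Real.exp (-(ε * kR)) * fR o := mul_nonneg (Real.exp_pos _).le (hfRnn o)
      have h2 : Real.exp (-(ε * kR)) * fR o ≤ Real.exp (-(ε * kR)) * Real.exp b :=
        mul_le_mul_of_nonneg_left (hfRle o) (Real.exp_pos _).le
      rw [abs_of_nonneg (by positivity : (0:ℝ) ≤ ε * kR + Real.exp (-(ε * kR)) * fR o)]
      linarith
    have hstep1 : ∫ o, g' o ∂(M D) + 1 ≤ ε * kR + Real.exp (-(ε * kR)) * ∫ o, fR o ∂(M D) := by
      have h1 := integral_mono_ae hint_g' hint_rhs hae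
      rw [integral_add (aux_integrable_bdd (M D) hg'meas hg'bdd) (integrable_const 1)] at h1
      rw [integral_add (integrable_const _) ((aux_integrable_bdd (M D) hfRmeas hfRabs).const_mul _)] at h1
      rw [integral_const, integral_const, integral_const_mul] at h1
      simpa [measure_univ] using h1
    -- compare the fR-integrals via group privacy
    have hMle : M D ≤ ENNReal.ofReal (Real.exp (ε * kR)) • M D' := by
      refine Measure.le_iff.mpr fun s hs => ?_
      rw [Measure.smul_apply, smul_eq_mul]
      exact hGP (cnt h) D D' (hdk h) s
    have hstep2 : ∫ o, fR o ∂(M D) ≤ Real.exp (ε * kR) * ∫ o, fR o ∂(M D') := by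
      have hL : ∫ o, fR o ∂(M D) = (∫⁻ o, ENNReal.ofReal (fR o) ∂(M D)).toReal := by
        rw [integral_eq_lintegral_of_nonneg_ae (Filter.Eventually.of_forall hfRnn)
          hfRmeas.aestronglyMeasurable]
      have hL' : ∫ o, fR o ∂(M D') = (∫⁻ o, ENNReal.ofReal (fR o) ∂(M D')).toReal := by
        rw [integral_eq_lintegral_of_nonneg_ae (Filter.Eventually.of_forall hfRnn)
          hfRmeas.aestronglyMeasurable]
      have hL'fin : ∫⁻ o, ENNReal.ofReal (fR o) ∂(M D') ≤ ENNReal.ofReal (Real.exp b) := by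
        calc ∫⁻ o, ENNReal.ofReal (fR o) ∂(M D') ≤ ∫⁻ _, ENNReal.ofReal (Real.exp b) ∂(M D') :=
          lintegral_mono fun o => ENNReal.ofReal_le_ofReal (hfRle o)
        _ = ENNReal.ofReal (Real.exp b) := by simp [measure_univ]
      have hmono : ∫⁻ o, ENNReal.ofReal (fR o) ∂(M D)
          ≤ ENNReal.ofReal (Real.exp (ε * kR)) * ∫⁻ o, ENNReal.ofReal (fR o) ∂(M D') := by
        calc ∫⁻ o, ENNReal.ofReal (fR o) ∂(M D)
            ≤ ∫⁻ o, ENNReal.ofReal (fR o) ∂(ENNReal.ofReal (Real.exp (ε * kR)) • M D') :=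
          lintegral_mono' hMle le_rfl
        _ = ENNReal.ofReal (Real.exp (ε * kR)) * ∫⁻ o, ENNReal.ofReal (fR o) ∂(M D') :=
          lintegral_smul_measure _ _
      rw [hL, hL']
      calc (∫⁻ o, ENNReal.ofReal (fR o) ∂(M D)).toReal
          ≤ (ENNReal.ofReal (Real.exp (ε * kR)) * ∫⁻ o, ENNReal.ofReal (fR o) ∂(M D')).toReal := by
            refine ENNReal.toReal_mono ?_ hmono
            exact ENNReal.mul_ne_top ENNReal.ofReal_ne_top
              (ne_top_of_le_ne_top ENNReal.ofReal_ne_top hL'fin)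
      _ = Real.exp (ε * kR) * (∫⁻ o, ENNReal.ofReal (fR o) ∂(M D')).toReal := by
            rw [ENNReal.toReal_mul, ENNReal.toReal_ofReal (Real.exp_pos _).le]
    have hstep3 : Real.exp (-(ε * kR)) * ∫ o, fR o ∂(M D) ≤ ∫ o, fR o ∂(M D') := by
      calc Real.exp (-(ε * kR)) * ∫ o, fR o ∂(M D)
          ≤ Real.exp (-(ε * kR)) * (Real.exp (ε * kR) * ∫ o, fR o ∂(M D')) :=
        mul_le_mul_of_nonneg_left hstep2 (Real.exp_pos _).le
      _ = ∫ o, fR o ∂(M D') := by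
        rw [← mul_assoc, ← Real.exp_add]
        simp
    have hJeq : J h = ∫ o, g' o ∂(M D) + b := by
      rw [hJ, hG]
      simp only
      rw [integral_add (aux_integrable_bdd (M D) hg'meas hg'bdd) (integrable_const b),
        integral_const]
      simp [measure_univ]
    have hkR2 : cntR h = kR := (hcnt_cast h).trans hkR.symm
    have hK2eq : K2 h = ∫ o, fR o ∂(M D') := rfl
    rw [hJeq, hkR2, hK2eq]
    linarith [hstep1, hstep3]
  -- measurability and integrability of J and K2 over the coupling
  have hJmeas : Measurable J := by
    have hJrepr : J = fun h => (∫⁻ o, ENNReal.ofReal (G o) ∂(M (Φ₁ h))).toReal := by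
      funext h
      rw [hJ]
      simp only
      rw [integral_eq_lintegral_of_nonneg_ae (Filter.Eventually.of_forall hGnn)
        hGmeas.aestronglyMeasurable]
    rw [hJrepr]
    exact ((Measure.measurable_lintegral hGmeas.ennreal_ofReal).comp
      (hM.comp hΦ₁meas)).ennreal_toReal
  have hK2meas : Measurable K2 := by
    have hK2repr : K2 = fun h => (∫⁻ o, ENNReal.ofReal (fR o) ∂(M (Φ₂ h))).toReal := by
      funext h
      rw [hK2]
      simp only
      rw [integral_eq_lintegral_of_nonneg_ae (Filter.Eventually.of_forall hfRnn)
        hfRmeas.aestronglyMeasurable]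
    rw [hK2repr]
    exact ((Measure.measurable_lintegral hfRmeas.ennreal_ofReal).comp
      (hM.comp hΦ₂meas)).ennreal_toReal
  have hGabs : ∀ o, |G o| ≤ 2 * b := by
    intro o
    rw [abs_of_nonneg (hGnn o)]
    exact hGub o
  have hJbdd : ∀ h, |J h| ≤ 2 * b := by
    intro h
    haveI := hMprob (Φ₁ h)
    rw [abs_of_nonneg (integral_nonneg hGnn)]
    calc J h ≤ ∫ _, 2 * b ∂(M (Φ₁ h)) :=
      integral_mono (aux_integrable_bdd _ hGmeas hGabs) (integrable_const _) hGub
    _ = 2 * b := by simp [measure_univ]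
  have hK2bdd : ∀ h, |K2 h| ≤ Real.exp b := by
    intro h
    haveI := hMprob (Φ₂ h)
    rw [abs_of_nonneg (integral_nonneg hfRnn)]
    calc K2 h ≤ ∫ _, Real.exp b ∂(M (Φ₂ h)) :=
      integral_mono (aux_integrable_bdd _ hfRmeas hfRabs) (integrable_const _) hfRle
    _ = Real.exp b := by simp [measure_univ]
  have hJint : Integrable J κ := aux_integrable_bdd κ hJmeas hJbdd
  have hK2int : Integrable K2 κ := aux_integrable_bdd κ hK2meas hK2bdd
  have hcntint' : Integrable cntR κ := aux_integrable_bdd κ hcntRmeas hcntRbdd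
  -- mixture identities
  have hGmix : ∫ o, G o ∂μ = ∫ h, J h ∂κ := by
    rw [hbind₁]
    exact aux_integral_bind κ _ (hM.comp hΦ₁meas) (fun h => hMprob _) G hGmeas hGnn hGub
  have hfRmix : ∫ o, fR o ∂ν = ∫ h, K2 h ∂κ := by
    rw [hbind₂]
    exact aux_integral_bind κ _ (hM.comp hΦ₂meas) (fun h => hMprob _) fR hfRmeas hfRnn hfRle
  -- the KL divergence equals ∫ g' dμ
  have hkl : klDiv μ ν = ∫ o, g' o ∂μ := by
    rw [klDiv]
    refine integral_congr_ae ?_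
    filter_upwards [hgoodμ] with o ho
    exact ((hgood_fR o ho.1 ho.2).2.2.2).symm
  have hGint : ∫ o, G o ∂μ = ∫ o, g' o ∂μ + b := by
    rw [hG]
    simp only
    rw [integral_add (aux_integrable_bdd μ hg'meas hg'bdd) (integrable_const b), integral_const]
    simp [measure_univ]
  -- ∫ fR dν ≤ 1
  have hfRν : ∫ o, fR o ∂ν ≤ 1 := by
    rw [integral_eq_lintegral_of_nonneg_ae (Filter.Eventually.of_forall hfRnn)
      hfRmeas.aestronglyMeasurable]
    have h1 : ∫⁻ o, ENNReal.ofReal (fR o) ∂ν ≤ 1 := by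
      calc ∫⁻ o, ENNReal.ofReal (fR o) ∂ν ≤ ∫⁻ o, f o ∂ν := by
            refine lintegral_mono fun o => ?_
            rcases eq_or_ne (f o) ∞ with htop | htop
            · rw [htop]; exact le_top
            · calc ENNReal.ofReal (fR o) ≤ ENNReal.ofReal ((f o).toReal) :=
                ENNReal.ofReal_le_ofReal (min_le_left _ _)
              _ = f o := ENNReal.ofReal_toReal htop
      _ ≤ μ Set.univ := Measure.lintegral_rnDeriv_le
      _ = 1 := measure_univ
    calc (∫⁻ o, ENNReal.ofReal (fR o) ∂ν).toReal ≤ (1 : ℝ≥0∞).toReal :=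
      ENNReal.toReal_mono one_ne_top h1
    _ = 1 := by simp
  -- put everything together
  have hRHSint : Integrable (fun h => ε * cntR h + K2 h + (b - 1)) κ :=
    ((hcntint'.const_mul ε).add hK2int).add (integrable_const _)
  have hfinal : ∫ h, J h ∂κ ≤ ε * (∑ i, tvDist (p1 i) (p2 i)) + ∫ o, fR o ∂ν + (b - 1) := by
    calc ∫ h, J h ∂κ ≤ ∫ h, (ε * cntR h + K2 h + (b - 1)) ∂κ :=
      integral_mono hJint hRHSint hcore
    _ = ε * (∫ h, cntR h ∂κ) + ∫ h, K2 h ∂κ + (b - 1) := by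
        have e1 : ∫ h, (ε * cntR h + K2 h + (b - 1)) ∂κ
            = ∫ h, (ε * cntR h + K2 h) ∂κ + ∫ _, (b - 1) ∂κ :=
          integral_add ((hcntint'.const_mul ε).add hK2int) (integrable_const _)
        have e2 : ∫ h, (ε * cntR h + K2 h) ∂κ = ∫ h, ε * cntR h ∂κ + ∫ h, K2 h ∂κ :=
          integral_add (hcntint'.const_mul ε) hK2int
        rw [e1, e2, integral_const_mul, integral_const]
        simp [measure_univ]
    _ = ε * (∑ i, tvDist (p1 i) (p2 i)) + ∫ o, fR o ∂ν + (b - 1) := by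
        rw [hcntint, hfRmix]
  have : klDiv μ ν + b ≤ ε * (∑ i, tvDist (p1 i) (p2 i)) + 1 + (b - 1) := by
    calc klDiv μ ν + b = ∫ o, G o ∂μ := by rw [hkl, hGint]
    _ = ∫ h, J h ∂κ := hGmix
    _ ≤ ε * (∑ i, tvDist (p1 i) (p2 i)) + ∫ o, fR o ∂ν + (b - 1) := hfinal
    _ ≤ ε * (∑ i, tvDist (p1 i) (p2 i)) + 1 + (b - 1) := by linarith
  linarith
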